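/- For every n ≥ 1, the maximally balanced tree T^mb_n satisfies Δ_CS(T^mb_n) = d_n, where d_n is the minimum of Δ_CS = C - S over all rooted binary trees with n leaves. -/
import Mathlib


/-- Rooted binary trees: a leaf, or an internal vertex with two child subtrees. -/
inductive BTree where
  | leaf : BTree
  | node : BTree → BTree → BTree
deriving DecidableEq

namespace BTree

/-- Number of leaves of a rooted binary tree. -/
def numLeaves : BTree → ℕ
  | leaf => 1
  | node l r => numLeaves l + numLeaves r

/-- Sackin index: sum over internal vertices `v` of `n_{v_a} + n_{v_b}`. -/
def sackin : BTree → ℕ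
  | leaf => 0
  | node l r => sackin l + sackin r + (numLeaves l + numLeaves r)

/-- Colless index: sum over internal vertices `v` of `|n_{v_a} - n_{v_b}|`. -/
def colless : BTree → ℕ
  | leaf => 0
  | node l r =>
      colless l + colless r +
        (max (numLeaves l) (numLeaves r) - min (numLeaves l) (numLeaves r))

/-- `N_a`: sum over internal vertices of the larger child-subtree leaf count. -/
def Na : BTree → ℕ
  | leaf => 0
  | node l r => Na l + Na r + max (numLeaves l) (numLeaves r)

/-- `N_b`: sum over internal vertices of the smaller child-subtree leaf count. -/
def Nb : BTree → ℕ
  | leaf => 0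
  | node l r => Nb l + Nb r + min (numLeaves l) (numLeaves r)

/-- `Δ_CS = C - S`, as an integer. -/
def deltaCS (T : BTree) : ℤ := (colless T : ℤ) - (sackin T : ℤ)

/-- Caterpillar trees: every internal vertex has at least one leaf child. -/
def isCaterpillar : BTree → Prop
  | leaf => True
  | node l r => (l = leaf ∧ isCaterpillar r) ∨ (r = leaf ∧ isCaterpillar l)

/-- The fully balanced tree of height `h`. -/
def fbTree : ℕ → BTree
  | 0 => leaf
  | h + 1 => node (fbTree h) (fbTree h)

end BTree

namespace BTree

/-- The maximally balanced tree `T^mb_n`: `T^mb_n = (T^mb_{⌈n/2⌉}, T^mb_{⌊n/2⌋})`. -/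
def mbTree : ℕ → BTree
  | 0 => leaf
  | 1 => leaf
  | n + 2 => node (mbTree ((n + 3) / 2)) (mbTree ((n + 2) / 2))
decreasing_by all_goals omega

end BTree

namespace BTree

lemma one_le_numLeaves : ∀ T : BTree, 1 ≤ numLeaves T
  | leaf => le_refl 1
  | node l r => by
      have := one_le_numLeaves l
      have := one_le_numLeaves r
      simp [numLeaves]; omega

lemma colless_add_two_nb (T : BTree) : colless T + 2 * Nb T = sackin T := by
  induction T with
  | leaf => simp [colless, Nb, sackin]
  | node l r hl hr =>
      simp only [colless, Nb, sackin]
      have h1 : max (numLeaves l) (numLeaves r) + min (numLeaves l) (numLeaves r)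
          = numLeaves l + numLeaves r := max_add_min _ _
      have h2 : min (numLeaves l) (numLeaves r) ≤ max (numLeaves l) (numLeaves r) :=
        min_le_max
      omega

lemma deltaCS_eq (T : BTree) : deltaCS T = -2 * (Nb T : ℤ) := by
  have := colless_add_two_nb T
  unfold deltaCS
  have : (colless T : ℤ) + 2 * (Nb T : ℤ) = (sackin T : ℤ) := by exact_mod_cast this
  linarith

lemma numLeaves_mbTree : ∀ n : ℕ, numLeaves (mbTree n) = max n 1 := by
  intro n
  induction n using Nat.strong_induction_on with
  | _ n ih =>
    match n with
    | 0 => rw [mbTree]; simp [numLeaves]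
    | 1 => rw [mbTree]; simp [numLeaves]
    | n + 2 =>
        rw [mbTree]
        simp only [numLeaves]
        rw [ih ((n+3)/2) (by omega), ih ((n+2)/2) (by omega)]
        omega

/-- `m n = Nb (T^mb_n)`. -/
def mseq (n : ℕ) : ℕ := Nb (mbTree n)

lemma mseq_zero : mseq 0 = 0 := by unfold mseq; rw [mbTree]; rfl

lemma mseq_one : mseq 1 = 0 := by unfold mseq; rw [mbTree]; rfl

lemma mseq_rec (n : ℕ) (hn : 2 ≤ n) :
    mseq n = mseq ((n + 1) / 2) + mseq (n / 2) + n / 2 := by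
  obtain ⟨k, rfl⟩ : ∃ k, n = k + 2 := ⟨n - 2, by omega⟩
  unfold mseq
  rw [mbTree]
  simp only [Nb]
  rw [numLeaves_mbTree, numLeaves_mbTree]
  have h1 : (k + 3) / 2 = (k + 2 + 1) / 2 := by omega
  have h2 : max ((k+3)/2) 1 = (k+3)/2 := by omega
  have h3 : max ((k+2)/2) 1 = (k+2)/2 := by omega
  have h4 : min ((k+3)/2) ((k+2)/2) = (k+2)/2 := by omega
  rw [h2, h3, h4, h1]

lemma mseq_even (a : ℕ) (ha : 1 ≤ a) : mseq (2 * a) = 2 * mseq a + a := by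
  rw [mseq_rec (2 * a) (by omega)]
  have h1 : (2 * a + 1) / 2 = a := by omega
  have h2 : 2 * a / 2 = a := by omega
  rw [h1, h2]; omega

lemma mseq_odd (a : ℕ) (ha : 1 ≤ a) : mseq (2 * a + 1) = mseq (a + 1) + mseq a + a := by
  rw [mseq_rec (2 * a + 1) (by omega)]
  have h1 : (2 * a + 1 + 1) / 2 = a + 1 := by omega
  have h2 : (2 * a + 1) / 2 = a := by omega
  rw [h1, h2]

lemma mseq_two : mseq 2 = 1 := by
  have h := mseq_even 1 (le_refl 1)
  rw [show 2 * 1 = 2 by omega, mseq_one] at h; omega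

lemma mseq_step : ∀ b : ℕ, 1 ≤ b → mseq b + 1 ≤ mseq (b + 1) := by
  intro b
  induction b using Nat.strong_induction_on with
  | _ b ih =>
    intro hb
    rcases Nat.lt_or_ge b 2 with h | h
    · interval_cases b
      rw [mseq_one, mseq_two]
    · rcases Nat.even_or_odd b with ⟨β, hβ⟩ | ⟨β, hβ⟩
      · have hβ1 : 1 ≤ β := by omega
        have eb : mseq b = 2 * mseq β + β := by
          rw [show b = 2 * β by omega]; exact mseq_even β hβ1
        have eb1 : mseq (b + 1) = mseq (β + 1) + mseq β + β := by
          rw [show b + 1 = 2 * β + 1 by omega]; exact mseq_odd β hβ1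
        have h3 := ih β (by omega) hβ1
        omega
      · have hβ1 : 1 ≤ β := by omega
        have eb : mseq b = mseq (β + 1) + mseq β + β := by
          rw [show b = 2 * β + 1 by omega]; exact mseq_odd β hβ1
        have eb1 : mseq (b + 1) = 2 * mseq (β + 1) + (β + 1) := by
          rw [show b + 1 = 2 * (β + 1) by omega]; exact mseq_even (β + 1) (by omega)
        have h3 := ih β (by omega) hβ1
        omega

/-- Key superadditivity lemma. -/
lemma mseq_key : ∀ k a b : ℕ, a + b = k → 1 ≤ a → 1 ≤ b →
    mseq a + mseq b + min a b ≤ mseq (a + b) := by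
  intro k
  induction k using Nat.strong_induction_on with
  | _ k ih =>
    have main : ∀ a b : ℕ, a + b = k → 1 ≤ a → 1 ≤ b → a ≤ b →
        mseq a + mseq b + min a b ≤ mseq (a + b) := by
      intro a b hk ha hb hab
      have hmin : min a b = a := by omega
      rw [hmin]
      rcases Nat.eq_or_lt_of_le ha with h1 | h2
      · -- a = 1
        rw [← h1, mseq_one]
        have := mseq_step b hb
        have e : 1 + b = b + 1 := by omega
        rw [e]; omega
      · have ha2 : 2 ≤ a := h2
        have hb2 : 2 ≤ b := by omega
        rcases Nat.even_or_odd a with ⟨α, hα⟩ | ⟨α, hα⟩ <;>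
          rcases Nat.even_or_odd b with ⟨β, hβ⟩ | ⟨β, hβ⟩
        · -- a = 2α, b = 2β
          have hα1 : 1 ≤ α := by omega
          have hβ1 : 1 ≤ β := by omega
          have ea : mseq a = 2 * mseq α + α := by
            rw [show a = 2 * α by omega]; exact mseq_even α hα1
          have eb : mseq b = 2 * mseq β + β := by
            rw [show b = 2 * β by omega]; exact mseq_even β hβ1
          have eab : mseq (a + b) = 2 * mseq (α + β) + (α + β) := by
            rw [show a + b = 2 * (α + β) by omega]; exact mseq_even (α + β) (by omega)
          have h4 := ih (α + β) (by omega) α β rfl hα1 hβ1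
          omega
        · -- a = 2α, b = 2β+1
          have hα1 : 1 ≤ α := by omega
          have hβ1 : 1 ≤ β := by omega
          have ea : mseq a = 2 * mseq α + α := by
            rw [show a = 2 * α by omega]; exact mseq_even α hα1
          have eb : mseq b = mseq (β + 1) + mseq β + β := by
            rw [show b = 2 * β + 1 by omega]; exact mseq_odd β hβ1
          have eab : mseq (a + b) = mseq (α + β + 1) + mseq (α + β) + (α + β) := by
            rw [show a + b = 2 * (α + β) + 1 by omega]; exact mseq_odd (α + β) (by omega)
          have h4 := ih (α + β + 1) (by omega) α (β + 1) (by omega) hα1 (by omega)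
          have h5 := ih (α + β) (by omega) α β rfl hα1 hβ1
          have e4 : α + (β + 1) = α + β + 1 := rfl
          rw [e4] at h4
          omega
        · -- a = 2α+1, b = 2β
          have hα1 : 1 ≤ α := by omega
          have hβ1 : α + 1 ≤ β := by omega
          have ea : mseq a = mseq (α + 1) + mseq α + α := by
            rw [show a = 2 * α + 1 by omega]; exact mseq_odd α hα1
          have eb : mseq b = 2 * mseq β + β := by
            rw [show b = 2 * β by omega]; exact mseq_even β (by omega)
          have eab : mseq (a + b) = mseq (α + β + 1) + mseq (α + β) + (α + β) := by
            rw [show a + b = 2 * (α + β) + 1 by omega]; exact mseq_odd (α + β) (by omega)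
          have h4 := ih (α + β + 1) (by omega) (α + 1) β (by omega) (by omega) (by omega)
          have h5 := ih (α + β) (by omega) α β rfl hα1 (by omega)
          have e4 : α + 1 + β = α + β + 1 := by omega
          rw [e4] at h4
          omega
        · -- a = 2α+1, b = 2β+1
          have hα1 : 1 ≤ α := by omega
          have hβ1 : α ≤ β := by omega
          have ea : mseq a = mseq (α + 1) + mseq α + α := by
            rw [show a = 2 * α + 1 by omega]; exact mseq_odd α hα1
          have eb : mseq b = mseq (β + 1) + mseq β + β := by
            rw [show b = 2 * β + 1 by omega]; exact mseq_odd β (by omega)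
          have eab : mseq (a + b) = 2 * mseq (α + β + 1) + (α + β + 1) := by
            rw [show a + b = 2 * (α + β + 1) by omega]; exact mseq_even (α + β + 1) (by omega)
          rcases Nat.eq_or_lt_of_le hβ1 with hEq | hLt
          · -- β = α
            subst hEq
            have h4 : mseq (α + α + 1) = mseq (α + 1) + mseq α + α := by
              rw [show α + α + 1 = 2 * α + 1 by omega]; exact mseq_odd α hα1
            omega
          · have h4 := ih (α + β + 1) (by omega) α (β + 1) (by omega) hα1 (by omega)
            have h5 := ih (α + β + 1) (by omega) (α + 1) β (by omega) (by omega) (by omega)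
            have e4 : α + (β + 1) = α + β + 1 := rfl
            have e5 : α + 1 + β = α + β + 1 := by omega
            rw [e4] at h4
            rw [e5] at h5
            omega
    intro a b hk ha hb
    rcases le_total a b with h | h
    · exact main a b hk ha hb h
    · have := main b a (by omega) hb ha h
      have e1 : b + a = a + b := by omega
      have e2 : min b a = min a b := by omega
      rw [e1, e2] at this
      linarith [this]

lemma nb_le_mseq : ∀ T : BTree, Nb T ≤ mseq (numLeaves T) := by
  intro T
  induction T with
  | leaf => simp [Nb, numLeaves, mseq_one]
  | node l r hl hr =>
      simp only [Nb, numLeaves]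
      have h1 := one_le_numLeaves l
      have h2 := one_le_numLeaves r
      have hkey := mseq_key (numLeaves l + numLeaves r) (numLeaves l) (numLeaves r)
        rfl h1 h2
      have : min (numLeaves l) (numLeaves r) ≤ min (numLeaves l) (numLeaves r) := le_refl _
      omega

end BTree

open BTree in
/-- `Δ_CS(T^mb_n) = d_n`, i.e. the maximally balanced tree attains the
minimum of `Δ_CS` among all rooted binary trees with `n` leaves. -/
theorem mbTree_minimizes_deltaCS (n : ℕ) (hn : 1 ≤ n) :
    IsLeast {x : ℤ | ∃ T : BTree, numLeaves T = n ∧ deltaCS T = x}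
      (deltaCS (mbTree n)) := by
  constructor
  · exact ⟨mbTree n, by rw [numLeaves_mbTree]; omega, rfl⟩
  · rintro x ⟨T, hT, rfl⟩
    rw [deltaCS_eq, deltaCS_eq]
    have h1 : Nb T ≤ mseq n := by
      have := nb_le_mseq T
      rwa [hT] at this
    have h2 : Nb (mbTree n) = mseq n := rfl
    rw [h2]
    have : (Nb T : ℤ) ≤ (mseq n : ℤ) := by exact_mod_cast h1
    linarith
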